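/- Let p : X → X₀ be a regular covering of a connected complex manifold with deck transformation group G, let 𝔞 ⊂ ℓ∞(G) be a closed unital right-translation-invariant subalgebra, and let c_𝔞X → X₀ be the associated fibre bundle with fibre Ĝ_𝔞 (the closure of the image of G in M_𝔞). For each orbit H of the G-action on Ĝ_𝔞 (with H given the discrete topology), the associated bundle X_H → X₀ with fibre H is an unbranched covering of X₀, and the natural maps ι_H : X_H → c_𝔞X are injective with pairwise disjoint images whose union is all of c_𝔞X. In particular, as a set, c_𝔞X is the disjoint union over orbits H of the images ι_H(X_H). -/

import Mathlib

open MulAction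

section Defs

variable (G : Type) [Group G] {X X₀ Gh : Type}

/-- The orbit of `ω` under the `G`-action, regarded as a type with the *discrete* topology. -/
def OrbitT [MulAction G Gh] (ω : Gh) : Type := {x : Gh // x ∈ MulAction.orbit G ω}

variable [MulAction G Gh]

/-- The value in `Gh` of a point of an orbit. -/
def OrbitT.val {ω : Gh} (x : OrbitT G ω) : Gh := x.1

instance (ω : Gh) : TopologicalSpace (OrbitT G ω) := ⊥

instance (ω : Gh) : DiscreteTopology (OrbitT G ω) := ⟨rfl⟩

instance (ω : Gh) : MulAction G (OrbitT G ω) where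
  smul g x := ⟨g • x.1, by
    obtain ⟨h, hh⟩ := x.2
    exact ⟨g * h, by simp only [] at hh ⊢; rw [← hh, mul_smul]⟩⟩
  one_smul x := Subtype.ext (one_smul G x.1)
  mul_smul g g' x := Subtype.ext (mul_smul g g' x.1)

variable [MulAction G X]

/-- The fibrewise compactification `c_𝔞 X`, realized as the associated bundle
`(X × Gh)/G` of the principal bundle `X → X₀` with fibre `Gh`. -/
def FibComp : Type := Quotient (MulAction.orbitRel G (X × Gh))

instance [TopologicalSpace X] [TopologicalSpace Gh] : TopologicalSpace (FibComp G (X := X) (Gh := Gh)) :=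
  inferInstanceAs (TopologicalSpace (Quotient _))

/-- The covering `X_H` associated to the orbit `H` of `ω`, realized as `(X × H)/G` with `H`
carrying the discrete topology. -/
def XOrb (ω : Gh) : Type := Quotient (MulAction.orbitRel G (X × OrbitT G ω))

instance [TopologicalSpace X] (ω : Gh) : TopologicalSpace (XOrb G (X := X) ω) :=
  inferInstanceAs (TopologicalSpace (Quotient _))

/-- The bundle projection `c_𝔞 X → X₀`. -/
def projE (p : X → X₀) (hreg : ∀ (g : G) (x : X), p (g • x) = p x) :
    FibComp G (X := X) (Gh := Gh) → X₀ :=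
  Quotient.lift (fun z => p z.1) (by
    rintro ⟨x, ω⟩ ⟨y, τ⟩ ⟨g, hg⟩
    have hx : g • y = x := congrArg Prod.fst hg
    simp only [← hx, hreg])

/-- The covering projection `X_H → X₀`. -/
def projOrb (p : X → X₀) (hreg : ∀ (g : G) (x : X), p (g • x) = p x) (ω : Gh) :
    XOrb G (X := X) ω → X₀ :=
  Quotient.lift (fun z => p z.1) (by
    rintro ⟨x, κ⟩ ⟨y, lam⟩ ⟨g, hg⟩
    have hx : g • y = x := congrArg Prod.fst hg
    simp only [← hx, hreg])

/-- The natural map `ι_H : X_H → c_𝔞 X`. -/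
def iotaOrb (ω : Gh) : XOrb G (X := X) ω → FibComp G (X := X) (Gh := Gh) :=
  Quotient.lift (fun z => Quotient.mk (MulAction.orbitRel G (X × Gh)) (z.1, OrbitT.val G z.2))
    (by
      rintro ⟨x, κ⟩ ⟨y, lam⟩ ⟨g, hg⟩
      refine Quotient.sound ⟨g, ?_⟩
      have hx : g • y = x := congrArg Prod.fst hg
      have hκ : g • lam = κ := congrArg Prod.snd hg
      have hval : g • (OrbitT.val G lam) = OrbitT.val G κ := by
        rw [← hκ]; rfl
      exact Prod.ext hx hval)

end Defs

private theorem covering_surjective' {X X₀ : Type} [TopologicalSpace X] [TopologicalSpace X₀]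
    (p : X → X₀) (hp : IsCoveringMap p) (hX : Nonempty X) (hconn : PreconnectedSpace X₀) :
    Function.Surjective p := by
  have hclosed : IsClosed (Set.range p) := by
    rw [← isOpen_compl_iff, isOpen_iff_mem_nhds]
    intro x₀ hx₀
    obtain ⟨hd, U, hxU, hU, hfU, t, ht⟩ := hp x₀
    refine Filter.mem_of_superset (hU.mem_nhds hxU) ?_
    rintro u hu ⟨x, rfl⟩
    have hxs : p x ∈ U := hu
    exact hx₀ ⟨((t ⟨x, hxs⟩).2 : ↥(p ⁻¹' {x₀})).1, ((t ⟨x, hxs⟩).2).2⟩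
  have hclopen : IsClopen (Set.range p) := ⟨hclosed, hp.isOpenMap.isOpen_range⟩
  exact Set.range_eq_univ.mp (hclopen.eq_univ ⟨p hX.some, Set.mem_range_self _⟩)

private theorem projOrb_isCoveringMap {G X X₀ Gh : Type} [Group G]
    [TopologicalSpace X] [TopologicalSpace X₀] [TopologicalSpace Gh]
    [MulAction G X] [MulAction G Gh]
    (hcontX : ∀ g : G, Continuous (fun x : X => g • x))
    (hX₀conn : ConnectedSpace X₀) (hXconn : ConnectedSpace X)
    (p : X → X₀) (hp : IsCoveringMap p)
    (hreg : ∀ (g : G) (x : X), p (g • x) = p x)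
    (hdeck : ∀ x y : X, p x = p y → ∃! g : G, g • x = y) (ω : Gh) :
    IsCoveringMap (projOrb G p hreg ω) := by
  classical
  set H := OrbitT G ω with hH
  have psurj : Function.Surjective p :=
    covering_surjective' p hp ⟨Classical.arbitrary X⟩ inferInstance
  -- continuity of the projection
  have hprojOrb_cont : Continuous (projOrb G p hreg ω) :=
    Continuous.quotient_lift (hp.continuous.comp continuous_fst) _
  -- openness of the quotient map q : X × H → XOrb
  have hsmul_cont : ∀ γ : G, Continuous (fun z : X × H => γ • z) := by
    intro γ
    refine Continuous.prodMk ((hcontX γ).comp continuous_fst) ?_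
    exact (continuous_of_discreteTopology (α := H)).comp continuous_snd
  have hq_open : IsOpenMap (Quotient.mk (MulAction.orbitRel G (X × H))) := by
    intro V hV
    rw [isOpen_coinduced]
    have heq : (Quotient.mk (MulAction.orbitRel G (X × H))) ⁻¹'
        ((Quotient.mk (MulAction.orbitRel G (X × H))) '' V) =
        ⋃ γ : G, (fun z : X × H => γ • z) ⁻¹' V := by
      ext z
      simp only [Set.mem_preimage, Set.mem_image, Set.mem_iUnion]
      constructor
      · rintro ⟨w, hwV, hw⟩
        obtain ⟨γ, hγ⟩ := Quotient.exact hw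
        exact ⟨γ, by rw [show γ • z = w from hγ]; exact hwV⟩
      · rintro ⟨γ, hγ⟩
        exact ⟨γ • z, hγ, Quotient.sound ⟨γ, rfl⟩⟩
    exact heq ▸ isOpen_iUnion fun γ => hV.preimage (hsmul_cont γ)
  -- build a trivialization near each point
  refine IsFiberBundle.isCoveringMap (F := H) fun x₀ => ?_
  obtain ⟨hd, t0, hxt0⟩ := hp x₀
  haveI hFdisc : DiscreteTopology ↥(p ⁻¹' {x₀}) := (hp x₀).1
  haveI : Nonempty ↥(p ⁻¹' {x₀}) := ⟨⟨(psurj x₀).choose, (psurj x₀).choose_spec⟩⟩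
  set t : Bundle.Trivialization (↥(p ⁻¹' {x₀})) p := (hp x₀).toTrivialization with ht
  have hx₀U : x₀ ∈ t.baseSet := (hp x₀).mem_toTrivialization_baseSet
  set U := t.baseSet with hU
  -- a fibre point over x₀
  obtain ⟨c₀, hc₀⟩ := psurj x₀
  set f₀ : ↥(p ⁻¹' {x₀}) := ⟨c₀, by simp [hc₀]⟩ with hf₀
  -- the local section over U and a global section
  set s : X₀ → X := fun u => t.toOpenPartialHomeomorph.symm (u, f₀) with hs
  have hps : ∀ u ∈ U, p (s u) = u := fun u hu => t.proj_symm_apply' hu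
  set σ : X₀ → X := fun u => if hu : u ∈ U then s u else Function.surjInv psurj u with hσdef
  have hσ : ∀ u, p (σ u) = u := by
    intro u
    by_cases hu : u ∈ U
    · simp only [hσdef, dif_pos hu]; exact hps u hu
    · simp only [hσdef, dif_neg hu]; exact Function.surjInv_eq psurj u
  have hσU : ∀ u ∈ U, σ u = s u := fun u hu => by simp only [hσdef, dif_pos hu]
  -- the deck element
  have hkey : ∀ x : X, ∃! g : G, g • σ (p x) = x := fun x => hdeck (σ (p x)) x (by rw [hσ])
  set dk : X → G := fun x => (hkey x).exists.choose with hdkdef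
  have hdk : ∀ x, dk x • σ (p x) = x := fun x => (hkey x).exists.choose_spec
  have hdkuniq : ∀ (x : X) (g : G), g • σ (p x) = x → g = dk x := fun x g hg =>
    (hkey x).unique hg (hdk x)
  have hdkeq : ∀ (γ : G) (x : X), dk (γ • x) = γ * dk x := by
    intro γ x
    refine (hkey (γ • x)).unique (hdk _) ?_
    rw [hreg, mul_smul, hdk]
  have hdkσ : ∀ u, dk (σ u) = 1 := by
    intro u
    refine (hdkuniq _ 1 ?_).symm
    rw [hσ, one_smul]
  -- the two maps
  set F2 : X × H → X₀ × H := fun z => (p z.1, (dk z.1)⁻¹ • z.2) with hF2def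
  have hF2inv : ∀ (a b : X × H), (MulAction.orbitRel G (X × H)).r a b → F2 a = F2 b := by
    rintro ⟨x, h⟩ ⟨y, k⟩ ⟨γ, hγ⟩
    have h1 : γ • y = x := congrArg Prod.fst hγ
    have h2 : γ • k = h := congrArg Prod.snd hγ
    simp only [hF2def]
    rw [← h1, ← h2, hreg, hdkeq, mul_inv_rev, mul_smul, inv_smul_smul]
  set Φ : XOrb G (X := X) ω → X₀ × H := Quotient.lift F2 hF2inv with hΦdef
  set Ψ : X₀ × H → XOrb G (X := X) ω := fun z =>
    Quotient.mk (MulAction.orbitRel G (X × H)) (σ z.1, z.2) with hΨdef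
  -- local constancy of dk on p ⁻¹' U
  have hscont : ContinuousOn s U := by
    have : ContinuousOn (fun u : X₀ => ((u, f₀) : X₀ × ↥(p ⁻¹' {x₀}))) U :=
      (continuous_id.prodMk continuous_const).continuousOn
    refine t.toOpenPartialHomeomorph.continuousOn_symm.comp this ?_
    intro u hu
    rw [t.target_eq]
    exact ⟨hu, trivial⟩
  have hdk_locconst : ∀ x : X, p x ∈ U → ∃ V : Set X, IsOpen V ∧ x ∈ V ∧
      ∀ y ∈ V, dk y = dk x := by
    intro x hx
    set g := dk x with hg
    have hsource : t.source = p ⁻¹' U := t.source_eq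
    -- key characterization
    have hchar : ∀ y : X, p y ∈ U → (dk y = g ↔ (t y).2 = (t (g • s (p y))).2) := by
      intro y hy
      have hys : y ∈ t.source := t.mem_source.2 hy
      have hgs : p (g • s (p y)) = p y := by rw [hreg, hps _ hy]
      have hgss : g • s (p y) ∈ t.source := t.mem_source.2 (by rw [hgs]; exact hy)
      constructor
      · intro hdky
        have hy2 : y = g • s (p y) := by
          conv_lhs => rw [← hdk y]
          rw [hdky, hσU _ hy]
        conv_lhs => rw [hy2]
      · intro hsnd
        have hfst : (t y).1 = (t (g • s (p y))).1 := by
          rw [t.coe_fst hys, t.coe_fst hgss, hgs]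
        have : y = g • s (p y) := t.injOn hys hgss (Prod.ext hfst hsnd)
        refine (hdkuniq y g ?_).symm
        rw [hσU _ hy, ← this]
    -- the equalizer is open
    set θ : X → ↥(p ⁻¹' {x₀}) := fun y => (t y).2 with hθ
    set η : X → ↥(p ⁻¹' {x₀}) := fun y => (t (g • s (p y))).2 with hη
    have hUopen : IsOpen (p ⁻¹' U) := t.open_baseSet.preimage hp.continuous
    have hθcont : ContinuousOn θ (p ⁻¹' U) := by
      refine continuous_snd.comp_continuousOn ?_
      exact t.continuousOn_toFun.mono (by rw [hsource])
    have hηcont : ContinuousOn η (p ⁻¹' U) := by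
      refine continuous_snd.comp_continuousOn ?_
      refine t.continuousOn_toFun.comp ?_ ?_
      · exact ((hcontX g).comp_continuousOn (hscont.comp
          (hp.continuous.continuousOn) (fun y hy => hy)))
      · intro y hy
        rw [hsource]
        simp only [Set.mem_preimage]
        rw [hreg, hps _ hy]
        exact hy
    have hVopen : IsOpen (p ⁻¹' U ∩ (fun y => (θ y, η y)) ⁻¹'
        {w : ↥(p ⁻¹' {x₀}) × ↥(p ⁻¹' {x₀}) | w.1 = w.2}) := by
      refine ContinuousOn.isOpen_inter_preimage (hθcont.prodMk hηcont) hUopen ?_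
      exact isOpen_discrete _
    refine ⟨_, hVopen, ⟨hx, ?_⟩, ?_⟩
    · exact (hchar x hx).mp rfl
    · rintro y ⟨hy1, hy2⟩
      exact (hchar y hy1).mpr hy2
  -- continuity of F2 on A
  set A : Set (X × H) := (fun z : X × H => p z.1) ⁻¹' U with hA
  have hAopen : IsOpen A := t.open_baseSet.preimage (hp.continuous.comp continuous_fst)
  have hF2cont : ContinuousOn F2 A := by
    intro z hz
    obtain ⟨V, hVopen, hzV, hVconst⟩ := hdk_locconst z.1 hz
    refine ContinuousAt.continuousWithinAt ?_
    have hnhds : V ×ˢ (Set.univ : Set H) ∈ nhds z := by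
      refine (hVopen.prod isOpen_univ).mem_nhds ⟨hzV, trivial⟩
    have heq : F2 =ᶠ[nhds z] fun w => (p w.1, (dk z.1)⁻¹ • w.2) := by
      refine Filter.eventuallyEq_of_mem hnhds ?_
      rintro ⟨y, k⟩ ⟨hy, -⟩
      simp only [hF2def, hVconst y hy]
    refine ContinuousAt.congr ?_ heq.symm
    refine ContinuousAt.prodMk ?_ ?_
    · exact (hp.continuous.comp continuous_fst).continuousAt
    · exact ((continuous_of_discreteTopology (α := H)
        (f := fun k : H => (dk z.1)⁻¹ • k)).comp continuous_snd).continuousAt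
  -- continuity of Φ on the source
  have hΦcont : ContinuousOn Φ (projOrb G p hreg ω ⁻¹' U) := by
    rw [continuousOn_open_iff (t.open_baseSet.preimage hprojOrb_cont)]
    intro W hW
    have himg : (projOrb G p hreg ω ⁻¹' U) ∩ Φ ⁻¹' W =
        (Quotient.mk (MulAction.orbitRel G (X × H))) '' (A ∩ F2 ⁻¹' W) := by
      ext e
      constructor
      · rintro ⟨he1, he2⟩
        obtain ⟨z, rfl⟩ := Quotient.exists_rep e
        exact ⟨z, ⟨he1, he2⟩, rfl⟩
      · rintro ⟨z, ⟨hz1, hz2⟩, rfl⟩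
        exact ⟨hz1, hz2⟩
    rw [himg]
    exact hq_open _ (hF2cont.isOpen_inter_preimage hAopen hW)
  -- continuity of Ψ on the target
  have hΨcont : ContinuousOn Ψ (U ×ˢ (Set.univ : Set H)) := by
    have h1 : ContinuousOn (fun z : X₀ × H => ((s z.1, z.2) : X × H))
        (U ×ˢ (Set.univ : Set H)) := by
      refine ContinuousOn.prodMk ?_ continuous_snd.continuousOn
      exact hscont.comp continuous_fst.continuousOn (fun z hz => hz.1)
    have h2 : ContinuousOn (fun z : X₀ × H =>
        Quotient.mk (MulAction.orbitRel G (X × H)) (s z.1, z.2))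
        (U ×ˢ (Set.univ : Set H)) :=
      continuous_quotient_mk'.comp_continuousOn h1
    refine h2.congr ?_
    rintro ⟨u, k⟩ ⟨hu, -⟩
    simp only [hΨdef, hσU u hu]
  -- assemble the trivialization
  refine ⟨{ toFun := Φ
            invFun := Ψ
            source := projOrb G p hreg ω ⁻¹' U
            target := U ×ˢ (Set.univ : Set H)
            map_source' := ?_
            map_target' := ?_
            left_inv' := ?_
            right_inv' := ?_
            open_source := t.open_baseSet.preimage hprojOrb_cont
            open_target := t.open_baseSet.prod isOpen_univ
            continuousOn_toFun := hΦcont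
            continuousOn_invFun := hΨcont
            baseSet := U
            open_baseSet := t.open_baseSet
            source_eq := rfl
            target_eq := rfl
            proj_toFun := ?_ }, hx₀U⟩
  · -- map_source'
    intro e he
    obtain ⟨⟨x, h⟩, rfl⟩ := Quotient.exists_rep e
    exact ⟨he, trivial⟩
  · -- map_target'
    rintro ⟨u, k⟩ ⟨hu, -⟩
    show p (σ u) ∈ U
    rw [hσ]; exact hu
  · -- left_inv'
    intro e _
    obtain ⟨⟨x, h⟩, rfl⟩ := Quotient.exists_rep e
    show Quotient.mk (MulAction.orbitRel G (X × H)) (σ (p x), (dk x)⁻¹ • h) = _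
    refine Quotient.sound ?_
    refine ⟨(dk x)⁻¹, ?_⟩
    show ((dk x)⁻¹ • x, (dk x)⁻¹ • h) = (σ (p x), (dk x)⁻¹ • h)
    refine Prod.ext ?_ rfl
    show (dk x)⁻¹ • x = σ (p x)
    rw [inv_smul_eq_iff]
    exact (hdk x).symm
  · -- right_inv'
    rintro ⟨u, k⟩ ⟨hu, -⟩
    show (p (σ u), (dk (σ u))⁻¹ • k) = (u, k)
    rw [hσ, hdkσ, inv_one, one_smul]
  · -- proj_toFun
    intro e he
    obtain ⟨⟨x, h⟩, rfl⟩ := Quotient.exists_rep e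
    rfl

/-- for a regular covering `p : X → X₀` with deck group `G` and a
right-translation action of `G` on `Gh = Gh_𝔞`, each associated bundle `X_H → X₀` over an orbit
`H` (with `H` discrete) is a covering of `X₀`, the natural maps `ι_H : X_H → c_𝔞X` are
injective, their images are pairwise disjoint (for distinct orbits), and their union is all of
`c_𝔞X`; so, as a set, `c_𝔞X` is the disjoint union of the `ι_H(X_H)` over the orbits `H`. -/
theorem stmt_13 {G X X₀ Gh : Type} [Group G]
    [TopologicalSpace X] [TopologicalSpace X₀] [TopologicalSpace Gh]
    [MulAction G X] [MulAction G Gh]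
    (hcontX : ∀ g : G, Continuous (fun x : X => g • x))
    (hcontGh : ∀ g : G, Continuous (fun ω : Gh => g • ω))
    (hX₀conn : ConnectedSpace X₀) (hXconn : ConnectedSpace X)
    (p : X → X₀) (hp : IsCoveringMap p)
    (hreg : ∀ (g : G) (x : X), p (g • x) = p x)
    (hdeck : ∀ x y : X, p x = p y → ∃! g : G, g • x = y) :
    (∀ ω : Gh, IsCoveringMap (projOrb G p hreg ω)) ∧
    (∀ ω : Gh, Function.Injective (iotaOrb G (X := X) ω)) ∧
    (∀ e : FibComp G (X := X) (Gh := Gh), ∃ ω : Gh, e ∈ Set.range (iotaOrb G (X := X) ω)) ∧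
    (∀ ω ω' : Gh, (Set.range (iotaOrb G (X := X) ω) ∩ Set.range (iotaOrb G (X := X) ω')).Nonempty →
      MulAction.orbit G ω = MulAction.orbit G ω') := by
  refine ⟨fun ω => projOrb_isCoveringMap hcontX hX₀conn hXconn p hp hreg hdeck ω, ?_, ?_, ?_⟩
  · -- injectivity of ι_H
    intro ω a b hab
    obtain ⟨⟨x, h⟩, rfl⟩ := Quotient.exists_rep a
    obtain ⟨⟨y, k⟩, rfl⟩ := Quotient.exists_rep b
    obtain ⟨γ, hγ⟩ := Quotient.exact hab
    have h1 : γ • y = x := congrArg Prod.fst hγ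
    have h2 : γ • OrbitT.val G k = OrbitT.val G h := congrArg Prod.snd hγ
    refine Quotient.sound ⟨γ, ?_⟩
    exact Prod.ext h1 (Subtype.ext h2)
  · -- the images cover everything
    intro e
    obtain ⟨⟨x, τ⟩, rfl⟩ := Quotient.exists_rep e
    exact ⟨τ, Quotient.mk _ (x, ⟨τ, MulAction.mem_orbit_self τ⟩), rfl⟩
  · -- pairwise disjointness of the images
    rintro ω ω' ⟨e, ⟨a, ha⟩, ⟨b, hb⟩⟩
    obtain ⟨⟨x, h⟩, rfl⟩ := Quotient.exists_rep a
    obtain ⟨⟨y, k⟩, rfl⟩ := Quotient.exists_rep b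
    rw [← hb] at ha
    obtain ⟨γ, hγ⟩ := Quotient.exact ha
    have h2 : γ • OrbitT.val G k = OrbitT.val G h := congrArg Prod.snd hγ
    calc MulAction.orbit G ω = MulAction.orbit G h.1 := (orbit_eq_iff.mpr h.2).symm
      _ = MulAction.orbit G (γ • k.1) := by rw [show γ • k.1 = h.1 from h2]
      _ = MulAction.orbit G k.1 := MulAction.orbit_smul γ k.1
      _ = MulAction.orbit G ω' := orbit_eq_iff.mpr k.2
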